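/- Let N, L, n be positive naturals with n ≤ N, T = {1,…,n} (training indices), K ∈ ℝ^{N×N} symmetric positive semidefinite, y : {1,…,N} → {1,…,L}, C : {1,…,N} → ℝ, e ∈ ℝ^{N×L} with e_{il} = 1 − δ_{l,y_i} for i ∈ T. Let D = {α ∈ ℝ^{N×L} : Σ_l α_{il} = 0 ∀i, α_{i,y_i} ≤ C_i, α_{il} ≤ 0 ∀l ≠ y_i} and W(α) = −(1/2)Σ_{i,j}Σ_l α_{il}α_{jl}K_{ij} − Σ_{i,l}α_{il}e_{il}. Let α maximize W over D; set SV₁ = {i : 0 < α_{i,y_i} < C_i} and SV₂ = {i : α_{i,y_i} = C_i}. For each t ∈ T let α^t maximize W over D^t := {α' ∈ D : α'_{tl} = 0 ∀l} and let ŷ_t be a maximizer of l ↦ Σ_i α^t_{il} K_{it}; the leave-one-out error count is Err := Card{t ∈ T : ŷ_t ≠ y_t}. Let H = [[K_{SV₁} ⊗ I_L, Aᵀ],[A, 0]] where K_{SV₁} is the principal submatrix of K on SV₁ and A = I_{|SV₁|} ⊗ 1_Lᵀ, and for t ∈ SV₁ let (H^{-1})_{tt} denote the L×L diagonal block of H^{-1}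 corresponding to t, assumed invertible. Assume: (a) for every t ∈ T with α_{t,y_t} = 0, ŷ_t = y_t; (b) for every t ∈ SV₁ ∩ T, α_tᵀ[(H^{-1})_{tt}]^{-1}α_t = Σ_l α_{tl}·Σ_i (α_{il} − α^t_{il})K_{it}, and moreover ŷ_t ≠ y_t implies Σ_l α_{tl}·Σ_i α^t_{il}K_{it} ≤ 0. Then Err ≤ Card{t ∈ SV₁ ∩ T : α_tᵀ[(H^{-1})_{tt}]^{-1}α_t ≥ Σ_l α_{tl}·Σ_i α_{il}K_{it}} + Card(SV₂ ∩ T). -/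
import Mathlib


open Matrix Kronecker

/-- Corollary 2 of the MU-SVM paper: the leave-one-out error of the multiclass
universum SVM is upper bounded by the number of Type-1 support vectors among the
training samples whose span value `α_tᵀ[(H⁻¹)_tt]⁻¹α_t` exceeds
`α_tᵀ Σ_i Σ_l α_{il} K(x_i,x_t)`, plus the number of Type-2 support vectors
among the training samples. -/
theorem stmt_6 {N L n : ℕ} (hN : 0 < N) (hL : 0 < L) (hn : 0 < n) (hnN : n ≤ N)
    (T : Set (Fin N)) (hT : T = {i : Fin N | (i : ℕ) < n})
    (K : Matrix (Fin N) (Fin N) ℝ) (hK : K.PosSemidef)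
    (y : Fin N → Fin L) (C : Fin N → ℝ) (e : Fin N → Fin L → ℝ)
    (he : ∀ i ∈ T, ∀ l, e i l = 1 - (if l = y i then (1 : ℝ) else 0))
    (D : Set (Fin N → Fin L → ℝ))
    (hD : D = {a | (∀ i, ∑ l, a i l = 0) ∧ (∀ i, a i (y i) ≤ C i) ∧
      ∀ i, ∀ l, l ≠ y i → a i l ≤ 0})
    (W : (Fin N → Fin L → ℝ) → ℝ)
    (hW : ∀ a : Fin N → Fin L → ℝ,
      W a = -(1/2) * (∑ i, ∑ j, ∑ l, a i l * a j l * K i j) - ∑ i, ∑ l, a i l * e i l)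
    (α : Fin N → Fin L → ℝ) (hα : α ∈ D) (hαmax : ∀ a ∈ D, W a ≤ W α)
    (SV1 SV2 : Set (Fin N))
    (hSV1 : SV1 = {i | 0 < α i (y i) ∧ α i (y i) < C i})
    (hSV2 : SV2 = {i | α i (y i) = C i})
    (αt : Fin N → Fin N → Fin L → ℝ)
    (hαtD : ∀ t ∈ T, αt t ∈ D ∧ ∀ l, αt t t l = 0)
    (hαtmax : ∀ t ∈ T, ∀ a ∈ D, (∀ l, a t l = 0) → W a ≤ W (αt t))
    (yhat : Fin N → Fin L)
    (hyhat : ∀ t ∈ T, ∀ l, ∑ i, αt t i l * K i t ≤ ∑ i, αt t i (yhat t) * K i t)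
    (Err : ℕ) (hErr : Err = Set.ncard {t | t ∈ T ∧ yhat t ≠ y t})
    [Fintype ↥SV1]
    (A : Matrix ↥SV1 (↥SV1 × Fin L) ℝ)
    (hA : A = Matrix.of fun i jl => if i = jl.1 then (1 : ℝ) else 0)
    (H : Matrix ((↥SV1 × Fin L) ⊕ ↥SV1) ((↥SV1 × Fin L) ⊕ ↥SV1) ℝ)
    (hH : H = Matrix.fromBlocks
      ((Matrix.of fun i j : ↥SV1 => K i j) ⊗ₖ (1 : Matrix (Fin L) (Fin L) ℝ)) Aᵀ A 0)
    (B : ↥SV1 → Matrix (Fin L) (Fin L) ℝ)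
    (hB : ∀ s : ↥SV1, B s = Matrix.of fun k l => H⁻¹ (Sum.inl (s, k)) (Sum.inl (s, l)))
    (hBinv : ∀ s : ↥SV1, IsUnit (B s).det)
    (hnonSV : ∀ t ∈ T, α t (y t) = 0 → yhat t = y t)
    (hSV1span : ∀ (t : Fin N) (ht : t ∈ SV1), t ∈ T →
      (α t ⬝ᵥ ((B ⟨t, ht⟩)⁻¹ *ᵥ α t) = ∑ l, α t l * (∑ i, (α i l - αt t i l) * K i t)) ∧
      (yhat t ≠ y t → ∑ l, α t l * (∑ i, αt t i l * K i t) ≤ 0)) :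
    Err ≤ Set.ncard {t : Fin N | ∃ ht : t ∈ SV1, t ∈ T ∧
        ∑ l, α t l * (∑ i, α i l * K i t) ≤ α t ⬝ᵥ ((B ⟨t, ht⟩)⁻¹ *ᵥ α t)}
      + Set.ncard (SV2 ∩ T) := by
  classical
  have hsub : {t | t ∈ T ∧ yhat t ≠ y t} ⊆
      {t : Fin N | ∃ ht : t ∈ SV1, t ∈ T ∧
        ∑ l, α t l * (∑ i, α i l * K i t) ≤ α t ⬝ᵥ ((B ⟨t, ht⟩)⁻¹ *ᵥ α t)}
      ∪ (SV2 ∩ T) := by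
    rintro t ⟨htT, hty⟩
    rw [hD] at hα
    obtain ⟨hsum, hub, hneg⟩ := hα
    have hnn : 0 ≤ α t (y t) := by
      have h1 : α t (y t) + ∑ l ∈ Finset.univ.erase (y t), α t l = 0 := by
        rw [Finset.add_sum_erase _ _ (Finset.mem_univ _)]; exact hsum t
      have h2 : ∑ l ∈ Finset.univ.erase (y t), α t l ≤ 0 :=
        Finset.sum_nonpos fun l hl => hneg t l (Finset.ne_of_mem_erase hl)
      linarith
    by_cases h0 : α t (y t) = 0
    · exact absurd (hnonSV t htT h0) hty
    by_cases hC : α t (y t) = C t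
    · exact Or.inr ⟨by rw [hSV2]; exact hC, htT⟩
    · have ht1 : t ∈ SV1 := by
        rw [hSV1]
        exact ⟨lt_of_le_of_ne hnn (Ne.symm h0), lt_of_le_of_ne (hub t) hC⟩
      refine Or.inl ⟨ht1, htT, ?_⟩
      obtain ⟨heq, hle⟩ := hSV1span t ht1 htT
      rw [heq]
      have hsplit : ∑ l, α t l * (∑ i, (α i l - αt t i l) * K i t)
          = (∑ l, α t l * (∑ i, α i l * K i t))
            - ∑ l, α t l * (∑ i, αt t i l * K i t) := by
        rw [← Finset.sum_sub_distrib]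
        refine Finset.sum_congr rfl fun l _ => ?_
        rw [← mul_sub, ← Finset.sum_sub_distrib]
        refine congrArg _ (Finset.sum_congr rfl fun i _ => ?_)
        ring
      rw [hsplit]
      linarith [hle hty]
  have hfin1 : ({t : Fin N | ∃ ht : t ∈ SV1, t ∈ T ∧
      ∑ l, α t l * (∑ i, α i l * K i t) ≤ α t ⬝ᵥ ((B ⟨t, ht⟩)⁻¹ *ᵥ α t)}
      ∪ (SV2 ∩ T)).Finite := Set.toFinite _
  calc Err ≤ Set.ncard ({t : Fin N | ∃ ht : t ∈ SV1, t ∈ T ∧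
        ∑ l, α t l * (∑ i, α i l * K i t) ≤ α t ⬝ᵥ ((B ⟨t, ht⟩)⁻¹ *ᵥ α t)}
      ∪ (SV2 ∩ T)) := by
        rw [hErr]; exact Set.ncard_le_ncard hsub hfin1
    _ ≤ _ := Set.ncard_union_le _ _
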